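/- Let s₀ be a complex number with Re s₀ > 1. Then γ₂(s₀) = ζ(s₀)γ - ζ₂(1, s₀) - ζ(s₀+1), where γ is the Euler–Mascheroni constant, ζ is the Riemann zeta-function, and ζ₂(1,s₀) = ∑_{m≥1}∑_{n≥1} m^{-1}(m+n)^{-s₀}. -/

import Mathlib

open Filter Finset Function Real Complex Topology

lemma aux_summable_rpow {p : ℝ} (hp : 1 < p) :
    Summable (fun n : ℕ => ((n : ℝ) + 1) ^ (-p)) := by
  have := (Real.summable_nat_rpow_inv.mpr hp)
  have h2 := (summable_nat_add_iff 1).mpr this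
  refine h2.congr fun n => ?_
  push_cast
  rw [← Real.rpow_neg (by positivity)]

lemma aux_summable_bound {p : ℝ} (hp : 1 < p) :
    Summable (fun n : ℕ => ((n : ℝ) + 1) ^ (-p) * (2 + Real.log ((n : ℝ) + 1))) := by
  set ε := (p - 1) / 2 with hε
  have hε0 : 0 < ε := by rw [hε]; linarith
  have hq : 1 < p - ε := by rw [hε]; linarith
  have hs1 := aux_summable_rpow hp
  have hs2 := aux_summable_rpow hq
  refine Summable.of_nonneg_of_le (fun n => ?_) (fun n => ?_)
    ((hs1.mul_left 2).add (hs2.mul_left ε⁻¹))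
  · have h1 : (0:ℝ) ≤ ((n:ℝ)+1) ^ (-p) := Real.rpow_nonneg (by positivity) _
    have h2 : (0:ℝ) ≤ Real.log ((n:ℝ)+1) :=
      Real.log_nonneg (by linarith [Nat.cast_nonneg (α := ℝ) n])
    positivity
  · have hn1 : (0:ℝ) < (n:ℝ) + 1 := by positivity
    have hlog : Real.log ((n:ℝ)+1) ≤ ((n:ℝ)+1) ^ ε / ε :=
      Real.log_le_rpow_div hn1.le hε0
    have hrp : (0:ℝ) ≤ ((n:ℝ)+1) ^ (-p) := Real.rpow_nonneg hn1.le _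
    have hstep : ((n:ℝ)+1) ^ (-p) * (2 + Real.log ((n:ℝ)+1))
        ≤ ((n:ℝ)+1) ^ (-p) * (2 + ((n:ℝ)+1) ^ ε / ε) := by
      apply mul_le_mul_of_nonneg_left _ hrp
      linarith
    refine hstep.trans (le_of_eq ?_)
    have hXY : ((n:ℝ)+1) ^ (-p) * ((n:ℝ)+1) ^ ε = ((n:ℝ)+1) ^ (-(p-ε)) := by
      rw [← Real.rpow_add hn1]; ring_nf
    have : ((n:ℝ)+1) ^ (-p) * (2 + ((n:ℝ)+1) ^ ε / ε)
        = 2 * ((n:ℝ)+1) ^ (-p) + ε⁻¹ * (((n:ℝ)+1) ^ (-p) * ((n:ℝ)+1) ^ ε) := by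
      field_simp
    rw [this, hXY]

lemma aux_norm_cpow (k : ℕ) (s : ℂ) :
    ‖((k + 1 : ℕ) : ℂ) ^ (-s)‖ = ((k : ℝ) + 1) ^ (-s.re) := by
  rw [norm_natCast_cpow_of_pos k.succ_pos]
  push_cast
  simp [neg_re]

lemma aux_norm_inv (k : ℕ) : ‖(((k + 1 : ℕ) : ℂ))⁻¹‖ = ((k : ℝ) + 1)⁻¹ := by
  rw [norm_inv, Complex.norm_natCast]
  push_cast
  ring

lemma aux_S (s₀ : ℂ) (h : 1 < s₀.re) :
    ∑' m : ℕ, ((m + 1 : ℕ) : ℂ) ^ (-s₀) * (∑ i ∈ range (m + 1), (((i + 1 : ℕ) : ℂ))⁻¹)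
      = (∑' p : ℕ × ℕ, ((p.1 + 1 : ℕ) : ℂ) ^ (-(1 : ℂ)) * ((p.1 + p.2 + 2 : ℕ) : ℂ) ^ (-s₀))
        + riemannZeta (s₀ + 1) := by
  set σ := s₀.re with hσ
  set φ : ℕ × ℕ → ℂ := fun p =>
    if p.2 ≤ p.1 then (((p.2 + 1 : ℕ) : ℂ))⁻¹ * ((p.1 + 1 : ℕ) : ℂ) ^ (-s₀) else 0 with hφdef
  set ψ : ℕ × ℕ → ℝ := fun p =>
    if p.2 ≤ p.1 then ((p.2 : ℝ) + 1)⁻¹ * ((p.1 : ℝ) + 1) ^ (-σ) else 0 with hψdef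
  have hψ_nonneg : ∀ p, 0 ≤ ψ p := by
    intro p
    simp only [hψdef]
    split
    · have : (0:ℝ) ≤ ((p.1 : ℝ) + 1) ^ (-σ) := Real.rpow_nonneg (by positivity) _
      positivity
    · exact le_rfl
  -- summability of ψ
  have hψ_sum : Summable ψ := by
    rw [summable_prod_of_nonneg hψ_nonneg]
    constructor
    · intro m
      apply summable_of_ne_finset_zero (s := range (m + 1))
      intro j hj
      simp only [mem_range, not_lt] at hj
      simp only [hψdef]
      rw [if_neg (by omega)]
    · have hbd := aux_summable_bound h
      refine Summable.of_nonneg_of_le (fun m => ?_) (fun m => ?_) hbd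
      · exact tsum_nonneg fun j => hψ_nonneg (m, j)
      · have hts : ∑' j, ψ (m, j) = ∑ j ∈ range (m + 1), ((j : ℝ) + 1)⁻¹ * ((m : ℝ) + 1) ^ (-σ) := by
          rw [tsum_eq_sum (s := range (m + 1))]
          · apply Finset.sum_congr rfl
            intro j hj
            simp only [mem_range] at hj
            simp only [hψdef]
            rw [if_pos (by omega)]
          · intro j hj
            simp only [mem_range, not_lt] at hj
            simp only [hψdef]
            rw [if_neg (by omega)]
        rw [hts, ← Finset.sum_mul]
        have hH : ∑ j ∈ range (m + 1), ((j : ℝ) + 1)⁻¹ = (harmonic (m + 1) : ℝ) := by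
          rw [harmonic]
          push_cast
          rfl
        rw [hH, mul_comm]
        have h1 := harmonic_le_one_add_log (m + 1)
        push_cast at h1
        have h2 : (0:ℝ) ≤ ((m:ℝ)+1) ^ (-σ) := Real.rpow_nonneg (by positivity) _
        have h3 : (0:ℝ) ≤ Real.log ((m:ℝ)+1) :=
          Real.log_nonneg (by linarith [Nat.cast_nonneg (α := ℝ) m])
        have : (harmonic (m+1) : ℝ) ≤ 2 + Real.log ((m:ℝ)+1) := by push_cast; linarith
        exact mul_le_mul_of_nonneg_left this h2
  have hφnorm : ∀ p, ‖φ p‖ = ψ p := by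
    intro p
    simp only [hφdef, hψdef]
    split
    · rw [norm_mul, aux_norm_inv, aux_norm_cpow, hσ]
    · simp
  have hφ_sum : Summable φ := by
    apply Summable.of_norm
    exact hψ_sum.congr fun p => (hφnorm p).symm
  -- Step 1 : tsum φ equals LHS
  have step1 : ∑' p : ℕ × ℕ, φ p
      = ∑' m : ℕ, ((m + 1 : ℕ) : ℂ) ^ (-s₀) * (∑ i ∈ range (m + 1), (((i + 1 : ℕ) : ℂ))⁻¹) := by
    have hrow : ∀ m : ℕ, Summable fun j => φ (m, j) := by
      intro m
      apply summable_of_ne_finset_zero (s := range (m + 1))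
      intro j hj
      simp only [mem_range, not_lt] at hj
      simp only [hφdef]
      rw [if_neg (by omega)]
    rw [Summable.tsum_prod' hφ_sum hrow]
    apply tsum_congr
    intro m
    rw [tsum_eq_sum (s := range (m + 1))]
    · rw [Finset.mul_sum]
      apply Finset.sum_congr rfl
      intro j hj
      simp only [mem_range] at hj
      simp only [hφdef]
      rw [if_pos (by omega), mul_comm]
    · intro j hj
      simp only [mem_range, not_lt] at hj
      simp only [hφdef]
      rw [if_neg (by omega)]
  -- Step 2 : reindex with the injection i (a,b) = (a+b, a)
  set ι : ℕ × ℕ → ℕ × ℕ := fun q => (q.1 + q.2, q.1) with hιdef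
  have hι : Function.Injective ι := by
    rintro ⟨a, b⟩ ⟨c, d⟩ hq
    simp only [hιdef, Prod.mk.injEq] at hq
    obtain ⟨h1, h2⟩ := hq
    simp only [Prod.mk.injEq]
    omega
  set F : ℕ × ℕ → ℂ := fun q =>
    (((q.1 + 1 : ℕ) : ℂ))⁻¹ * ((q.1 + q.2 + 1 : ℕ) : ℂ) ^ (-s₀) with hFdef
  have hφι : ∀ q, φ (ι q) = F q := by
    intro q
    simp only [hφdef, hιdef, hFdef]
    rw [if_pos (by omega)]
  have step2 : ∑' q : ℕ × ℕ, F q = ∑' p : ℕ × ℕ, φ p := by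
    rw [← tsum_congr hφι]
    apply Function.Injective.tsum_eq hι
    intro p hp
    simp only [Function.mem_support] at hp
    have hle : p.2 ≤ p.1 := by
      by_contra hx
      apply hp
      simp only [hφdef]
      rw [if_neg hx]
    refine ⟨(p.2, p.1 - p.2), ?_⟩
    simp only [hιdef]
    obtain ⟨x, y⟩ := p
    simp only [Prod.mk.injEq]
    have hle' : y ≤ x := hle
    exact ⟨by omega, trivial⟩
  have hF_sum : Summable F := (hφ_sum.comp_injective hι).congr hφι
  have hFnorm_sum : Summable fun q => ‖F q‖ := by
    refine (hψ_sum.comp_injective hι).congr fun q => ?_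
    rw [show (ψ ∘ ι) q = ψ (ι q) from rfl, ← hφnorm (ι q), hφι q]
  have hrowF : ∀ a : ℕ, Summable fun b => F (a, b) := fun a => hF_sum.prod_factor a
  have hζ1 : Summable (fun a : ℕ => F (a, 0)) := by
    apply hF_sum.comp_injective (i := fun a : ℕ => ((a, 0) : ℕ × ℕ))
    intro a b hab
    simpa using congrArg Prod.fst hab
  have hrowFn : Summable fun a => ∑' b, ‖F (a, b)‖ :=
    ((summable_prod_of_nonneg (fun q => norm_nonneg (F q))).mp hFnorm_sum).2
  have hsucc : Function.Injective (fun c : ℕ => c + 1) := fun a b hab => by simpa using hab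
  have htail_sum : Summable fun a => ∑' c, F (a, c + 1) := by
    refine Summable.of_norm_bounded hrowFn fun a => ?_
    have h1 : Summable fun c => ‖F (a, c + 1)‖ :=
      ((hFnorm_sum.prod_factor a).comp_injective hsucc)
    calc ‖∑' c, F (a, c + 1)‖ ≤ ∑' c, ‖F (a, c + 1)‖ := norm_tsum_le_tsum_norm h1
      _ ≤ ∑' b, ‖F (a, b)‖ := Summable.tsum_le_tsum_of_inj (fun c => c + 1) hsucc
          (fun b _ => norm_nonneg _) (fun c => le_rfl) h1 (hFnorm_sum.prod_factor a)
  have hG : Summable fun p : ℕ × ℕ => F (p.1, p.2 + 1) := by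
    apply hF_sum.comp_injective (i := fun p : ℕ × ℕ => ((p.1, p.2 + 1) : ℕ × ℕ))
    intro p q hpq
    have h1 := congrArg Prod.fst hpq
    have h2 := congrArg Prod.snd hpq
    simp at h1 h2
    exact Prod.ext h1 h2
  have hGrow : ∀ a : ℕ, Summable fun c => F (a, c + 1) := fun a =>
    (hrowF a).comp_injective hsucc
  have hzeta : ∑' a : ℕ, F (a, 0) = riemannZeta (s₀ + 1) := by
    have hre : 1 < (s₀ + 1).re := by
      rw [Complex.add_re, Complex.one_re]; linarith
    rw [zeta_eq_tsum_one_div_nat_add_one_cpow hre]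
    apply tsum_congr
    intro a
    simp only [hFdef]
    have hx : ((a + 1 : ℕ) : ℂ) ≠ 0 := Nat.cast_ne_zero.mpr a.succ_ne_zero
    rw [show a + 0 + 1 = a + 1 from by omega,
      show ((a : ℂ) + 1) = ((a + 1 : ℕ) : ℂ) from by push_cast; ring,
      cpow_add _ _ hx, cpow_one, cpow_neg, one_div, mul_inv]
    ring
  have hζ₂ : ∑' a : ℕ, ∑' c : ℕ, F (a, c + 1)
      = ∑' p : ℕ × ℕ, ((p.1 + 1 : ℕ) : ℂ) ^ (-(1 : ℂ)) * ((p.1 + p.2 + 2 : ℕ) : ℂ) ^ (-s₀) := by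
    rw [← Summable.tsum_prod' hG hGrow]
    apply tsum_congr
    intro p
    simp only [hFdef]
    rw [show p.1 + (p.2 + 1) + 1 = p.1 + p.2 + 2 from by omega, cpow_neg_one]
  calc ∑' m : ℕ, ((m + 1 : ℕ) : ℂ) ^ (-s₀) * (∑ i ∈ range (m + 1), (((i + 1 : ℕ) : ℂ))⁻¹)
      = ∑' p : ℕ × ℕ, φ p := step1.symm
    _ = ∑' q : ℕ × ℕ, F q := step2.symm
    _ = ∑' a : ℕ, ∑' b : ℕ, F (a, b) := Summable.tsum_prod' hF_sum hrowF
    _ = ∑' a : ℕ, (F (a, 0) + ∑' c : ℕ, F (a, c + 1)) :=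
        tsum_congr fun a => Summable.tsum_eq_zero_add (hrowF a)
    _ = (∑' a : ℕ, F (a, 0)) + ∑' a : ℕ, ∑' c : ℕ, F (a, c + 1) := Summable.tsum_add hζ1 htail_sum
    _ = (∑' p : ℕ × ℕ, ((p.1 + 1 : ℕ) : ℂ) ^ (-(1 : ℂ)) * ((p.1 + p.2 + 2 : ℕ) : ℂ) ^ (-s₀))
        + riemannZeta (s₀ + 1) := by rw [hzeta, hζ₂, add_comm]

lemma aux_harm (k : ℕ) :
    (((harmonic k : ℝ) : ℂ)) = ∑ i ∈ range k, (((i + 1 : ℕ) : ℂ))⁻¹ := by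
  rw [harmonic]
  push_cast
  rfl

lemma aux_key (m N : ℕ) :
    (∑ n ∈ Finset.Icc 1 N, (1 : ℂ) / ((m + 1 + n : ℕ) : ℂ))
      = (((harmonic (m + 1 + N) : ℝ) : ℂ)) - (((harmonic (m + 1) : ℝ) : ℂ)) := by
  rw [aux_harm, aux_harm, Finset.sum_range_add, add_sub_cancel_left]
  rw [← Finset.Ico_add_one_right_eq_Icc, Finset.sum_Ico_eq_sum_range]
  simp only [Nat.add_sub_cancel, Nat.succ_sub_one]
  apply Finset.sum_congr rfl
  intro i _
  rw [one_div, show m + 1 + (1 + i) = m + 1 + i + 1 from by omega]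

theorem stmt14 (s₀ : ℂ) (h : 1 < s₀.re) (γ₂ : ℂ)
    (hγ₂ : Filter.Tendsto (fun N : ℕ =>
      ∑' m : ℕ, ((m + 1 : ℕ) : ℂ) ^ (-s₀) *
        ((∑ n ∈ Finset.Icc 1 N, (1 : ℂ) / ((m + 1 + n : ℕ) : ℂ))
          - Complex.log ((m + 1 + N : ℕ) : ℂ)))
      Filter.atTop (nhds γ₂)) :
    γ₂ = riemannZeta s₀ * (Real.eulerMascheroniConstant : ℂ)
      - (∑' p : ℕ × ℕ, ((p.1 + 1 : ℕ) : ℂ) ^ (-(1 : ℂ)) * ((p.1 + p.2 + 2 : ℕ) : ℂ) ^ (-s₀))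
      - riemannZeta (s₀ + 1) := by
  have hσ : 1 < s₀.re := h
  set γ' : ℂ := (Real.eulerMascheroniConstant : ℂ) with hγ'def
  set g : ℕ → ℂ := fun m => ((m + 1 : ℕ) : ℂ) ^ (-s₀) * (γ' - ((harmonic (m + 1) : ℝ) : ℂ))
    with hgdef
  -- rewrite of each term
  have hterm : ∀ (N m : ℕ),
      ((m + 1 : ℕ) : ℂ) ^ (-s₀) *
        ((∑ n ∈ Finset.Icc 1 N, (1 : ℂ) / ((m + 1 + n : ℕ) : ℂ))
          - Complex.log ((m + 1 + N : ℕ) : ℂ))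
      = ((m + 1 : ℕ) : ℂ) ^ (-s₀) *
        ((((harmonic (m + 1 + N) : ℝ) - Real.log ((m + 1 + N : ℕ) : ℝ) : ℝ) : ℂ)
          - ((harmonic (m + 1) : ℝ) : ℂ)) := by
    intro N m
    rw [aux_key, ← Complex.natCast_log]
    push_cast
    ring
  -- the real bound
  have hbd : ∀ (N m : ℕ),
      |(harmonic (m + 1 + N) : ℝ) - Real.log ((m + 1 + N : ℕ) : ℝ) - (harmonic (m + 1) : ℝ)|
        ≤ 2 + Real.log ((m : ℝ) + 1) := by
    intro N m
    set k := m + 1 + N with hk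
    have hk1 : (1 : ℝ) ≤ (k : ℝ) := Nat.one_le_cast.mpr (by omega)
    have f1 : Real.log (k : ℝ) ≤ (harmonic k : ℝ) := by
      refine le_trans (Real.log_le_log (by linarith) ?_) (log_add_one_le_harmonic k)
      push_cast; linarith
    have f2 : (harmonic k : ℝ) ≤ 1 + Real.log (k : ℝ) := harmonic_le_one_add_log k
    have f3 : (0 : ℝ) ≤ (harmonic (m + 1) : ℝ) := by
      have := harmonic_pos (Nat.succ_ne_zero m)
      positivity
    have f4 : (harmonic (m + 1) : ℝ) ≤ 1 + Real.log ((m : ℝ) + 1) := by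
      have := harmonic_le_one_add_log (m + 1)
      push_cast at this ⊢
      linarith
    have f5 : (0 : ℝ) ≤ Real.log ((m : ℝ) + 1) :=
      Real.log_nonneg (by linarith [Nat.cast_nonneg (α := ℝ) m])
    rw [abs_le]
    constructor <;> linarith
  -- dominated convergence
  have hDC : Filter.Tendsto (fun N : ℕ =>
      ∑' m : ℕ, ((m + 1 : ℕ) : ℂ) ^ (-s₀) *
        ((∑ n ∈ Finset.Icc 1 N, (1 : ℂ) / ((m + 1 + n : ℕ) : ℂ))
          - Complex.log ((m + 1 + N : ℕ) : ℂ)))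
      Filter.atTop (nhds (∑' m : ℕ, g m)) := by
    apply tendsto_tsum_of_dominated_convergence
      (bound := fun m : ℕ => ((m : ℝ) + 1) ^ (-s₀.re) * (2 + Real.log ((m : ℝ) + 1)))
      (aux_summable_bound hσ)
    · intro m
      have h0 : Filter.Tendsto (fun N : ℕ => m + 1 + N) atTop atTop :=
        (tendsto_add_atTop_nat (m + 1)).congr fun n => Nat.add_comm n (m + 1)
      have h1 : Filter.Tendsto
          (fun N : ℕ => (harmonic (m + 1 + N) : ℝ) - Real.log ((m + 1 + N : ℕ) : ℝ))
          atTop (𝓝 Real.eulerMascheroniConstant) :=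
        Real.tendsto_harmonic_sub_log.comp h0
      have h2 : Filter.Tendsto
          (fun N : ℕ => ((((harmonic (m + 1 + N) : ℝ) - Real.log ((m + 1 + N : ℕ) : ℝ) : ℝ)) : ℂ))
          atTop (𝓝 γ') := (Complex.continuous_ofReal.tendsto _).comp h1
      have h3 := ((h2.sub_const (((harmonic (m + 1) : ℝ) : ℂ))).const_mul
        (((m + 1 : ℕ) : ℂ) ^ (-s₀)))
      refine h3.congr fun N => ?_
      rw [hterm N m]
    · apply Filter.Eventually.of_forall
      intro N m
      rw [hterm N m, norm_mul, aux_norm_cpow]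
      apply mul_le_mul_of_nonneg_left _ (Real.rpow_nonneg (by positivity) _)
      rw [show ((((harmonic (m + 1 + N) : ℝ) - Real.log ((m + 1 + N : ℕ) : ℝ) : ℝ)) : ℂ)
            - ((harmonic (m + 1) : ℝ) : ℂ)
          = ((((harmonic (m + 1 + N) : ℝ) - Real.log ((m + 1 + N : ℕ) : ℝ)
              - (harmonic (m + 1) : ℝ) : ℝ)) : ℂ) from by push_cast; ring,
        Complex.norm_real]
      exact hbd N m
  have hγeq : γ₂ = ∑' m : ℕ, g m := tendsto_nhds_unique hγ₂ hDC
  -- algebra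
  have hz : Summable (fun m : ℕ => ((m + 1 : ℕ) : ℂ) ^ (-s₀)) :=
    Summable.of_norm ((aux_summable_rpow hσ).congr fun m => (aux_norm_cpow m s₀).symm)
  have hS : Summable (fun m : ℕ => ((m + 1 : ℕ) : ℂ) ^ (-s₀) * ((harmonic (m + 1) : ℝ) : ℂ)) := by
    apply Summable.of_norm_bounded (aux_summable_bound hσ)
    intro m
    rw [norm_mul, aux_norm_cpow, Complex.norm_real]
    apply mul_le_mul_of_nonneg_left _ (Real.rpow_nonneg (by positivity) _)
    have f3 : (0 : ℝ) ≤ (harmonic (m + 1) : ℝ) := by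
      have := harmonic_pos (Nat.succ_ne_zero m)
      positivity
    have f4 : (harmonic (m + 1) : ℝ) ≤ 1 + Real.log ((m : ℝ) + 1) := by
      have := harmonic_le_one_add_log (m + 1)
      push_cast at this ⊢
      linarith
    have f5 : (0 : ℝ) ≤ Real.log ((m : ℝ) + 1) :=
      Real.log_nonneg (by linarith [Nat.cast_nonneg (α := ℝ) m])
    rw [Real.norm_eq_abs, _root_.abs_of_nonneg f3]
    linarith
  have hzeta0 : ∑' m : ℕ, ((m + 1 : ℕ) : ℂ) ^ (-s₀) = riemannZeta s₀ := by
    rw [zeta_eq_tsum_one_div_nat_add_one_cpow hσ]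
    apply tsum_congr
    intro m
    rw [cpow_neg, one_div]
    push_cast
    ring_nf
  have hsplit : ∑' m : ℕ, g m
      = riemannZeta s₀ * γ'
        - ∑' m : ℕ, ((m + 1 : ℕ) : ℂ) ^ (-s₀) * ((harmonic (m + 1) : ℝ) : ℂ) := by
    simp only [hgdef]
    have : ∀ m : ℕ, ((m + 1 : ℕ) : ℂ) ^ (-s₀) * (γ' - ((harmonic (m + 1) : ℝ) : ℂ))
        = ((m + 1 : ℕ) : ℂ) ^ (-s₀) * γ'
          - ((m + 1 : ℕ) : ℂ) ^ (-s₀) * ((harmonic (m + 1) : ℝ) : ℂ) := fun m => by ring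
    rw [tsum_congr this, Summable.tsum_sub (hz.mul_right γ') hS, tsum_mul_right, hzeta0]
  have hSval : ∑' m : ℕ, ((m + 1 : ℕ) : ℂ) ^ (-s₀) * ((harmonic (m + 1) : ℝ) : ℂ)
      = (∑' p : ℕ × ℕ, ((p.1 + 1 : ℕ) : ℂ) ^ (-(1 : ℂ)) * ((p.1 + p.2 + 2 : ℕ) : ℂ) ^ (-s₀))
        + riemannZeta (s₀ + 1) := by
    rw [← aux_S s₀ hσ]
    exact tsum_congr fun m => by rw [aux_harm]
  rw [hγeq, hsplit, hSval]
  ring
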